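/- arXiv:2604.02655 — 2 statements merged into one kernel-verified Lean document; each statement's English description precedes it below -/
import Mathlib

section
/- Under the statistical model, applied simultaneously to each of n records a = 1, …, n (each record a having its own cluster assignment id_a ∈ {1,…,k} and its own threshold ε_a ≥ 0, and, for each fixed a, the random variables D^{a,j}_z being mutually independent across all j ∈ {1,…,k} and z ∈ {1,…,r}), the expected number of uncertain records after r samples satisfies E[ #{ a ∈ {1,…,n} : a is uncertain } ] ≤ Σ_{a=1}^{n} exp( −2r · Σ_{i=1}^{k} ε_a² / |Ĉ_i|² ). (This is Lemma 1 of the paper; the exponent is negative, as produced by the Hoeffding-inequality argument in the paper's proof.) -/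
open MeasureTheory ProbabilityTheory
open scoped Classical

section AuxHoeffding
open Real

private 
lemma aux_key_ineq (p : ℝ) (hp0 : 0 ≤ p) (hp1 : p ≤ 1) (h : ℝ) :
    1 - p + p * Real.exp h ≤ Real.exp (p * h + h ^ 2 / 8) := by
  have hq : ∀ x : ℝ, 0 < 1 - p + p * Real.exp x := by
    intro x
    nlinarith [Real.exp_pos x, mul_nonneg hp0 (Real.exp_pos x).le,
      mul_nonneg (sub_nonneg.2 hp1) (Real.exp_pos x).le]
  set f : ℝ → ℝ := fun x => p * x + x ^ 2 / 8 - Real.log (1 - p + p * Real.exp x) with hf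
  set f' : ℝ → ℝ := fun x => p + x / 4 - p * Real.exp x / (1 - p + p * Real.exp x) with hf'
  have hu : ∀ x : ℝ, HasDerivAt (fun y => 1 - p + p * Real.exp y) (p * Real.exp x) x := by
    intro x
    simpa using ((Real.hasDerivAt_exp x).const_mul p).const_add (1 - p)
  have hder1 : ∀ x, HasDerivAt f (f' x) x := by
    intro x
    have h1 : HasDerivAt (fun y : ℝ => p * y) p x := by
      simpa using (hasDerivAt_id x).const_mul p
    have h2 : HasDerivAt (fun y : ℝ => y ^ 2 / 8) (2 * x / 8) x := by
      simpa using (hasDerivAt_pow 2 x).div_const 8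
    have h3 : HasDerivAt (fun y => Real.log (1 - p + p * Real.exp y))
        ((1 - p + p * Real.exp x)⁻¹ * (p * Real.exp x)) x :=
      by have h := (Real.hasDerivAt_log (hq x).ne').comp x (hu x); exact h
    have := (h1.add h2).sub h3
    refine HasDerivAt.congr_deriv this ?_
    simp only [hf']
    field_simp
    ring
  have hder2 : ∀ x, HasDerivAt f'
      (1 / 4 - p * Real.exp x * (1 - p) / (1 - p + p * Real.exp x) ^ 2) x := by
    intro x
    have h1 : HasDerivAt (fun y : ℝ => p + y / 4) (1 / 4) x := by
      simpa using ((hasDerivAt_id x).div_const 4).const_add p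
    have h2 : HasDerivAt (fun y => p * Real.exp y / (1 - p + p * Real.exp y))
        ((p * Real.exp x * (1 - p + p * Real.exp x) - p * Real.exp x * (p * Real.exp x)) /
          (1 - p + p * Real.exp x) ^ 2) x :=
      ((Real.hasDerivAt_exp x).const_mul p).div (hu x) (hq x).ne'
    have := h1.sub h2
    refine HasDerivAt.congr_deriv this ?_
    rw [show p * Real.exp x * (1 - p) = p * Real.exp x * (1 - p + p * Real.exp x) - p * Real.exp x * (p * Real.exp x) by ring]
  have hd2nonneg : ∀ x, 0 ≤ 1 / 4 - p * Real.exp x * (1 - p) / (1 - p + p * Real.exp x) ^ 2 := by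
    intro x
    have hqx := hq x
    have key : p * Real.exp x * (1 - p) / (1 - p + p * Real.exp x) ^ 2 ≤ 1 / 4 := by
      rw [div_le_iff₀ (by positivity)]
      nlinarith [sq_nonneg (1 - p - p * Real.exp x)]
    linarith
  have hdiff' : Differentiable ℝ f' := fun x => (hder2 x).differentiableAt
  have hmono : Monotone f' := by
    apply monotone_of_deriv_nonneg hdiff'
    intro x
    rw [(hder2 x).deriv]
    exact hd2nonneg x
  have hf'0 : f' 0 = 0 := by simp [hf']
  have hdifff : Differentiable ℝ f := fun x => (hder1 x).differentiableAt
  have hderiv_f : ∀ x, deriv f x = f' x := fun x => (hder1 x).deriv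
  have hf0 : f 0 = 0 := by simp [hf]
  have hnonneg : ∀ x, 0 ≤ f x := by
    intro x
    rcases le_total 0 x with hx | hx
    · have : MonotoneOn f (Set.Ici 0) := by
        apply monotoneOn_of_deriv_nonneg (convex_Ici 0) hdifff.continuous.continuousOn
          (hdifff.differentiableOn)
        intro y hy
        rw [hderiv_f]
        rw [← hf'0]
        exact hmono (le_of_lt (by simpa using hy))
      have := this (Set.self_mem_Ici) (by exact hx) hx
      linarith [hf0]
    · have : AntitoneOn f (Set.Iic 0) := by
        apply antitoneOn_of_deriv_nonpos (convex_Iic 0) hdifff.continuous.continuousOn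
          (hdifff.differentiableOn)
        intro y hy
        rw [hderiv_f]
        rw [← hf'0]
        exact hmono (le_of_lt (by simpa using hy))
      have := this (by exact hx : x ∈ Set.Iic 0) Set.self_mem_Iic hx
      linarith [hf0]
    -- done
  have := hnonneg h
  have hlog : Real.log (1 - p + p * Real.exp h) ≤ p * h + h ^ 2 / 8 := by
    simp only [hf] at this
    linarith
  calc 1 - p + p * Real.exp h = Real.exp (Real.log (1 - p + p * Real.exp h)) :=
        (Real.exp_log (hq h)).symm
    _ ≤ Real.exp (p * h + h ^ 2 / 8) := Real.exp_le_exp.2 hlog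

private lemma aux_hoeffding {Ω : Type*} [MeasurableSpace Ω] (μ : Measure Ω) [IsProbabilityMeasure μ]
    (t a b : ℝ) (X : Ω → ℝ) (hX : Measurable X)
    (hab : ∀ ω, X ω ∈ Set.Icc a b) (hmean : ∫ ω, X ω ∂μ = 0) :
    mgf X μ t ≤ Real.exp (t ^ 2 * (b - a) ^ 2 / 8) := by
  have habs : ∀ ω, |X ω| ≤ max |a| |b| := by
    intro ω
    obtain ⟨h1, h2⟩ := hab ω
    rw [abs_le]
    constructor
    · have h3 : |a| ≤ max |a| |b| := le_max_left _ _
      cases abs_cases a <;> linarith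
    · have h3 : |b| ≤ max |a| |b| := le_max_right _ _
      cases abs_cases b <;> linarith
  have hXint : Integrable X μ :=
    Integrable.mono' (integrable_const (max |a| |b|)) hX.aestronglyMeasurable
      (Filter.Eventually.of_forall fun ω => by rw [Real.norm_eq_abs]; exact habs ω)
  have ha0 : a ≤ 0 := by
    have : ∫ _ : Ω, a ∂μ ≤ ∫ ω, X ω ∂μ :=
      integral_mono (integrable_const a) hXint fun ω => (hab ω).1
    simpa [hmean] using this
  have hb0 : 0 ≤ b := by
    have : ∫ ω, X ω ∂μ ≤ ∫ _ : Ω, b ∂μ :=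
      integral_mono hXint (integrable_const b) fun ω => (hab ω).2
    simpa [hmean] using this
  rcases eq_or_lt_of_le (ha0.trans hb0) with hba | hba
  · -- a = b = 0, X ≡ 0
    have ha : a = 0 := by linarith [hba.le, hba.ge]
    have hb : b = 0 := by linarith
    have hX0 : X = fun _ => (0 : ℝ) := by
      funext ω
      have := hab ω
      rw [ha, hb] at this
      exact le_antisymm this.2 this.1
    rw [hX0]
    have : mgf (fun _ => (0:ℝ)) μ t = Real.exp (t * 0) := mgf_const 0
    rw [this]
    simp [Real.exp_le_exp]
    positivity
  · set p := -a / (b - a) with hp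
    have hba' : 0 < b - a := sub_pos.2 hba
    have hp0 : 0 ≤ p := div_nonneg (neg_nonneg.2 ha0) hba'.le
    have hp1 : p ≤ 1 := by rw [div_le_one hba']; linarith
    set e1 := Real.exp (t * a) with he1
    set e2 := Real.exp (t * b) with he2
    have hpt : ∀ ω, Real.exp (t * X ω) ≤
        (e1 * b - e2 * a) / (b - a) + (e2 - e1) / (b - a) * X ω := by
      intro ω
      obtain ⟨h1, h2⟩ := hab ω
      have hθ : 0 ≤ (b - X ω) / (b - a) := div_nonneg (by linarith) hba'.le
      have hσ : 0 ≤ (X ω - a) / (b - a) := div_nonneg (by linarith) hba'.le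
      have hsum : (b - X ω) / (b - a) + (X ω - a) / (b - a) = 1 := by field_simp; ring
      have hcx := convexOn_exp.2 (Set.mem_univ (t * a)) (Set.mem_univ (t * b)) hθ hσ hsum
      simp only [smul_eq_mul] at hcx
      have harg : (b - X ω) / (b - a) * (t * a) + (X ω - a) / (b - a) * (t * b) = t * X ω := by
        field_simp
        ring
      rw [harg] at hcx
      have halg : (b - X ω) / (b - a) * e1 + (X ω - a) / (b - a) * e2
          = (e1 * b - e2 * a) / (b - a) + (e2 - e1) / (b - a) * X ω := by
        field_simp
        ring
      rw [← halg]
      exact hcx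
    have hint1 : Integrable (fun ω => Real.exp (t * X ω)) μ := by
      refine Integrable.mono' (integrable_const (Real.exp (|t| * max |a| |b|)))
        (hX.const_mul t).exp.aestronglyMeasurable
        (Filter.Eventually.of_forall fun ω => ?_)
      rw [Real.norm_eq_abs, abs_of_pos (Real.exp_pos _), Real.exp_le_exp]
      calc t * X ω ≤ |t * X ω| := le_abs_self _
        _ = |t| * |X ω| := abs_mul _ _
        _ ≤ |t| * max |a| |b| := by
            exact mul_le_mul_of_nonneg_left (habs ω) (abs_nonneg t)
    have hint2 : Integrable
        (fun ω => (e1 * b - e2 * a) / (b - a) + (e2 - e1) / (b - a) * X ω) μ :=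
      (integrable_const _).add (hXint.const_mul _)
    have hI : mgf X μ t ≤ (e1 * b - e2 * a) / (b - a) := by
      have hle := integral_mono hint1 hint2 hpt
      rw [integral_add (integrable_const _) (hXint.const_mul _), integral_const,
        integral_const_mul, hmean, probReal_univ] at hle
      simpa [mgf] using hle
    have hfinal : (e1 * b - e2 * a) / (b - a) ≤ Real.exp (t ^ 2 * (b - a) ^ 2 / 8) := by
      have heq : (e1 * b - e2 * a) / (b - a) = e1 * (1 - p + p * Real.exp (t * (b - a))) := by
        rw [he1, he2, hp]
        rw [show t * b = t * a + t * (b - a) by ring, Real.exp_add]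
        field_simp
        ring
      rw [heq]
      calc e1 * (1 - p + p * Real.exp (t * (b - a)))
          ≤ e1 * Real.exp (p * (t * (b - a)) + (t * (b - a)) ^ 2 / 8) := by
            exact mul_le_mul_of_nonneg_left (aux_key_ineq p hp0 hp1 _) (Real.exp_pos _).le
        _ = Real.exp (t * a + (p * (t * (b - a)) + (t * (b - a)) ^ 2 / 8)) := by
            rw [he1, ← Real.exp_add]
        _ = Real.exp (t ^ 2 * (b - a) ^ 2 / 8) := by
            congr 1
            rw [hp]
            field_simp
            ring
    exact hI.trans hfinal

end AuxHoeffding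

/-- Lemma 1 of the paper. Statistical model: `k` nonempty clusters with
sizes `c 1, …, c k ≥ 1`, `r ≥ 1` sampling iterations, and `n` records. For each record `a`
and cluster index `j`, the random variables `D a j 1, …, D a j r` take values in `[0, c j]`
and are identically distributed with common mean `dstar a j`; moreover, for each fixed `a`,
the variables `D a j z` are mutually independent across all pairs `(j, z)`. The empirical
mean is `d(a,j)(ω) = (1/r) · ∑_z D a j z ω`. Record `a`, assigned to cluster `ida a` with
threshold `ε a ≥ 0`, is *uncertain* at `ω` if `dstar a (ida a) − d(a, ida a)(ω) ≥ ε a` and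
`d(a,i)(ω) − dstar a i ≥ ε a` for every `i ≠ ida a`. Then the expected number of uncertain
records after `r` samples is at most `∑_a exp(−2r · ∑_i (ε a)² / (c i)²)`. -/
theorem stmt0
    {Ω : Type*} [MeasurableSpace Ω] (μ : Measure Ω) [IsProbabilityMeasure μ]
    (n k r : ℕ) (hk : 1 ≤ k) (hr : 1 ≤ r)
    (c : Fin k → ℕ) (hc : ∀ i, 1 ≤ c i)
    (D : Fin n → Fin k → Fin r → Ω → ℝ)
    (hmeas : ∀ a j z, Measurable (D a j z))
    (hbdd : ∀ a j z ω, D a j z ω ∈ Set.Icc (0 : ℝ) ((c j : ℕ) : ℝ))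
    (hident : ∀ a j z z', IdentDistrib (D a j z) (D a j z') μ μ)
    (hindep : ∀ a : Fin n,
      iIndepFun
        (fun p : Fin k × Fin r => D a p.1 p.2) μ)
    (dstar : Fin n → Fin k → ℝ)
    (hmean : ∀ a j z, ∫ ω, D a j z ω ∂μ = dstar a j)
    (ida : Fin n → Fin k) (ε : Fin n → ℝ) (hε : ∀ a, 0 ≤ ε a) :
    ∫ ω, ((Finset.univ.filter (fun a : Fin n =>
            ε a ≤ dstar a (ida a) - (1 / (r : ℝ)) * ∑ z, D a (ida a) z ω ∧
            ∀ i, i ≠ ida a →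
              ε a ≤ (1 / (r : ℝ)) * ∑ z, D a i z ω - dstar a i)).card : ℝ) ∂μ
      ≤ ∑ a : Fin n,
          Real.exp (-2 * (r : ℝ) * ∑ i, (ε a) ^ 2 / ((c i : ℕ) : ℝ) ^ 2) := by
  have hrR : (0 : ℝ) < (r : ℝ) := by exact_mod_cast hr
  have hcR : ∀ i, (0 : ℝ) < (c i : ℝ) := fun i => by exact_mod_cast hc i
  set P : Fin n → Ω → Prop := fun a ω =>
    ε a ≤ dstar a (ida a) - (1 / (r : ℝ)) * ∑ z, D a (ida a) z ω ∧
    ∀ i, i ≠ ida a → ε a ≤ (1 / (r : ℝ)) * ∑ z, D a i z ω - dstar a i with hPdef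
  have hDint : ∀ a j z, Integrable (D a j z) μ := by
    intro a j z
    refine Integrable.mono' (integrable_const ((c j : ℝ))) (hmeas a j z).aestronglyMeasurable
      (Filter.Eventually.of_forall fun ω => ?_)
    obtain ⟨h1, h2⟩ := hbdd a j z ω
    rw [Real.norm_eq_abs, abs_of_nonneg h1]
    exact h2
  have hsummeas : ∀ a (j : Fin k), Measurable (fun ω => ∑ z : Fin r, D a j z ω) :=
    fun a j => Finset.measurable_sum _ fun z _ => hmeas a j z
  have hPmeasSet : ∀ a, MeasurableSet {ω | P a ω} := by
    intro a
    have h1 : MeasurableSet {ω | ε a ≤ dstar a (ida a) - (1 / (r : ℝ)) * ∑ z, D a (ida a) z ω} :=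
      measurableSet_le measurable_const
        ((measurable_const.sub ((hsummeas a (ida a)).const_mul _)))
    have h2 : ∀ i : Fin k, MeasurableSet
        {ω | ε a ≤ (1 / (r : ℝ)) * ∑ z, D a i z ω - dstar a i} := fun i =>
      measurableSet_le measurable_const
        (((hsummeas a i).const_mul _).sub measurable_const)
    have : {ω | P a ω} =
        {ω | ε a ≤ dstar a (ida a) - (1 / (r : ℝ)) * ∑ z, D a (ida a) z ω} ∩
          ⋂ i : Fin k, ⋂ _h : i ≠ ida a,
            {ω | ε a ≤ (1 / (r : ℝ)) * ∑ z, D a i z ω - dstar a i} := by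
      ext ω
      simp [hPdef, Set.mem_iInter]
    rw [this]
    exact h1.inter (MeasurableSet.iInter fun i => MeasurableSet.iInter fun _ => h2 i)
  have hdstar_mem : ∀ a j, dstar a j ∈ Set.Icc (0 : ℝ) ((c j : ℝ)) := by
    intro a j
    have z0 : Fin r := ⟨0, hr⟩
    constructor
    · have : ∫ _ : Ω, (0 : ℝ) ∂μ ≤ ∫ ω, D a j z0 ω ∂μ :=
        integral_mono (integrable_const 0) (hDint a j z0) fun ω => (hbdd a j z0 ω).1
      simpa [hmean a j z0] using this
    · have : ∫ ω, D a j z0 ω ∂μ ≤ ∫ _ : Ω, ((c j : ℝ)) ∂μ :=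
        integral_mono (hDint a j z0) (integrable_const _) fun ω => (hbdd a j z0 ω).2
      simpa [hmean a j z0] using this
  -- key per-record bound
  have key : ∀ a : Fin n, (μ {ω | P a ω}).toReal ≤
      Real.exp (-2 * (r : ℝ) * ∑ i, (ε a) ^ 2 / ((c i : ℝ)) ^ 2) := by
    intro a
    set s : Fin k → ℝ := fun i => if i = ida a then -1 else 1 with hsdef
    set w : Fin k → ℝ := fun i => 4 * ε a / ((c i : ℝ)) ^ 2 with hwdef
    have hw0 : ∀ i, 0 ≤ w i := fun i => by
      have := hε a; have := hcR i; positivity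
    set X : Fin k × Fin r → Ω → ℝ :=
      fun p ω => w p.1 * (s p.1 * (D a p.1 p.2 ω - dstar a p.1)) with hXdef
    have hXmeas : ∀ p, Measurable (X p) := fun p =>
      (((hmeas a p.1 p.2).sub measurable_const).const_mul (s p.1)).const_mul (w p.1)
    have hXindep : iIndepFun X μ := by
      have := (hindep a).comp
        (fun p (x : ℝ) => w p.1 * (s p.1 * (x - dstar a p.1)))
        (fun p => ((measurable_id.sub measurable_const).const_mul (s p.1)).const_mul (w p.1))
      exact this
    have hXmean : ∀ p, ∫ ω, X p ω ∂μ = 0 := by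
      intro p
      simp only [hXdef]
      rw [integral_const_mul, integral_const_mul,
        integral_sub (hDint a p.1 p.2) (integrable_const _), integral_const, probReal_univ,
        hmean a p.1 p.2]
      simp
    have hXBdd : ∀ p ω, |X p ω| ≤ w p.1 * (c p.1 : ℝ) := by
      intro p ω
      obtain ⟨h1, h2⟩ := hbdd a p.1 p.2 ω
      obtain ⟨h3, h4⟩ := hdstar_mem a p.1
      have hs : |s p.1| = 1 := by
        simp only [hsdef]
        by_cases h : p.1 = ida a <;> simp [h]
      rw [hXdef, abs_mul, abs_mul, abs_of_nonneg (hw0 p.1), hs, one_mul]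
      have : |D a p.1 p.2 ω - dstar a p.1| ≤ (c p.1 : ℝ) := by
        rw [abs_le]; constructor <;> linarith
      exact mul_le_mul_of_nonneg_left this (hw0 p.1)
    set ε' : ℝ := (r : ℝ) * ε a * ∑ i, w i with hε'def
    -- event inclusion
    have hsub : {ω | P a ω} ⊆ {ω | ε' ≤ ∑ p : Fin k × Fin r, X p ω} := by
      intro ω hω
      obtain ⟨h1, h2⟩ := hω
      have hterm : ∀ i : Fin k, (r : ℝ) * ε a * w i ≤ ∑ z : Fin r, X (i, z) ω := by
        intro i
        have hsz : ∑ z : Fin r, X (i, z) ω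
            = w i * (s i * (∑ z, D a i z ω - (r : ℝ) * dstar a i)) := by
          simp only [hXdef]
          rw [← Finset.mul_sum, ← Finset.mul_sum, Finset.sum_sub_distrib, Finset.sum_const,
            Finset.card_univ, Fintype.card_fin, nsmul_eq_mul]
        rw [hsz]
        by_cases hi : i = ida a
        · subst hi
          have hs : s (ida a) = -1 := by simp [hsdef]
          rw [hs]
          have hmul : (r : ℝ) * ε a ≤ (r : ℝ) * dstar a (ida a) - ∑ z, D a (ida a) z ω := by
            have h5 := mul_le_mul_of_nonneg_left h1 hrR.le
            have hrs : (r : ℝ) * ((1 / (r : ℝ)) * ∑ z, D a (ida a) z ω)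
                = ∑ z, D a (ida a) z ω := by
              field_simp
            nlinarith [h5, hrs]
          have h6 := mul_le_mul_of_nonneg_left hmul (hw0 (ida a))
          nlinarith [h6]
        · have hs : s i = 1 := by simp [hsdef, hi]
          rw [hs]
          have hmul : (r : ℝ) * ε a ≤ ∑ z, D a i z ω - (r : ℝ) * dstar a i := by
            have h5 := mul_le_mul_of_nonneg_left (h2 i hi) hrR.le
            have hrs : (r : ℝ) * ((1 / (r : ℝ)) * ∑ z, D a i z ω) = ∑ z, D a i z ω := by
              field_simp
            nlinarith [h5, hrs]
          have h6 := mul_le_mul_of_nonneg_left hmul (hw0 i)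
          nlinarith [h6]
      rw [Set.mem_setOf_eq, Fintype.sum_prod_type, hε'def, Finset.mul_sum]
      exact Finset.sum_le_sum fun i _ => hterm i
    -- integrability of exp of the sum
    have hsum_bdd : ∀ ω, ∑ p : Fin k × Fin r, X p ω ≤ ∑ p : Fin k × Fin r, w p.1 * (c p.1 : ℝ) :=
      fun ω => Finset.sum_le_sum fun p _ => (le_abs_self _).trans (hXBdd p ω)
    have hSmeas : Measurable (fun ω => ∑ p : Fin k × Fin r, X p ω) :=
      Finset.measurable_sum _ fun p _ => hXmeas p
    have hint : Integrable (fun ω => Real.exp (1 * ∑ p : Fin k × Fin r, X p ω)) μ := by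
      refine Integrable.mono'
        (integrable_const (Real.exp (∑ p : Fin k × Fin r, w p.1 * (c p.1 : ℝ))))
        (hSmeas.const_mul 1).exp.aestronglyMeasurable
        (Filter.Eventually.of_forall fun ω => ?_)
      rw [Real.norm_eq_abs, abs_of_pos (Real.exp_pos _), Real.exp_le_exp, one_mul]
      exact hsum_bdd ω
    -- per-variable mgf bound
    have hmgf : ∀ p : Fin k × Fin r, mgf (X p) μ 1
        ≤ Real.exp ((1:ℝ) ^ 2 * (w p.1 * (c p.1 : ℝ)) ^ 2 / 8) := by
      intro p
      obtain ⟨h3, h4⟩ := hdstar_mem a p.1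
      by_cases hi : p.1 = ida a
      · have hs : s p.1 = -1 := by simp [hsdef, hi]
        have hb : ∀ ω, X p ω ∈ Set.Icc (w p.1 * (dstar a p.1 - (c p.1 : ℝ))) (w p.1 * dstar a p.1) := by
          intro ω
          obtain ⟨h1, h2⟩ := hbdd a p.1 p.2 ω
          simp only [hXdef, hs, Set.mem_Icc]
          constructor
          · nlinarith [mul_nonneg (hw0 p.1) (sub_nonneg.2 h2)]
          · nlinarith [mul_nonneg (hw0 p.1) h1]
        have := aux_hoeffding μ 1 _ _ (X p) (hXmeas p) hb (hXmean p)
        refine this.trans (Real.exp_le_exp.2 (le_of_eq ?_))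
        ring
      · have hs : s p.1 = 1 := by simp [hsdef, hi]
        have hb : ∀ ω, X p ω ∈ Set.Icc (w p.1 * (0 - dstar a p.1)) (w p.1 * ((c p.1 : ℝ) - dstar a p.1)) := by
          intro ω
          obtain ⟨h1, h2⟩ := hbdd a p.1 p.2 ω
          simp only [hXdef, hs, Set.mem_Icc]
          constructor
          · nlinarith [mul_nonneg (hw0 p.1) h1]
          · nlinarith [mul_nonneg (hw0 p.1) (sub_nonneg.2 h2)]
        have := aux_hoeffding μ 1 _ _ (X p) (hXmeas p) hb (hXmean p)
        refine this.trans (Real.exp_le_exp.2 (le_of_eq ?_))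
        ring
    -- assemble via Chernoff
    have hfun : (fun ω => ∑ p : Fin k × Fin r, X p ω) = ∑ p : Fin k × Fin r, X p := by
      funext ω
      simp [Finset.sum_apply]
    calc (μ {ω | P a ω}).toReal
        ≤ (μ {ω | ε' ≤ ∑ p : Fin k × Fin r, X p ω}).toReal :=
          ENNReal.toReal_mono (measure_ne_top μ _) (measure_mono hsub)
      _ ≤ Real.exp (-1 * ε') * mgf (fun ω => ∑ p : Fin k × Fin r, X p ω) μ 1 :=
          measure_ge_le_exp_mul_mgf ε' zero_le_one hint
      _ = Real.exp (-1 * ε') * ∏ p : Fin k × Fin r, mgf (X p) μ 1 := by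
          rw [hfun, iIndepFun.mgf_sum hXindep hXmeas]
      _ ≤ Real.exp (-1 * ε') *
            ∏ p : Fin k × Fin r, Real.exp ((1:ℝ) ^ 2 * (w p.1 * (c p.1 : ℝ)) ^ 2 / 8) := by
          refine mul_le_mul_of_nonneg_left ?_ (Real.exp_pos _).le
          exact Finset.prod_le_prod (fun p _ => mgf_nonneg) (fun p _ => hmgf p)
      _ = Real.exp (-1 * ε' + ∑ p : Fin k × Fin r, (1:ℝ) ^ 2 * (w p.1 * (c p.1 : ℝ)) ^ 2 / 8) := by
          rw [← Real.exp_sum, ← Real.exp_add]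
      _ = Real.exp (-2 * (r : ℝ) * ∑ i, (ε a) ^ 2 / ((c i : ℝ)) ^ 2) := by
          congr 1
          have hps : ∑ p : Fin k × Fin r, (1:ℝ) ^ 2 * (w p.1 * (c p.1 : ℝ)) ^ 2 / 8
              = ∑ i : Fin k, (r : ℝ) * ((1:ℝ) ^ 2 * (w i * (c i : ℝ)) ^ 2 / 8) := by
            rw [Fintype.sum_prod_type]
            refine Finset.sum_congr rfl fun i _ => ?_
            simp [Finset.sum_const, Fintype.card_fin, nsmul_eq_mul]
          rw [hps, hε'def, Finset.mul_sum, neg_one_mul, ← Finset.sum_neg_distrib,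
            ← Finset.sum_add_distrib, Finset.mul_sum]
          refine Finset.sum_congr rfl fun i _ => ?_
          have hci := (hcR i).ne'
          simp only [hwdef]
          field_simp
          ring
  -- main assembly
  have hcard : ∀ ω, ((Finset.univ.filter (fun a : Fin n => P a ω)).card : ℝ)
      = ∑ a : Fin n, Set.indicator {ω' | P a ω'} (fun _ => (1 : ℝ)) ω := by
    intro ω
    rw [Finset.card_filter]
    push_cast
    refine Finset.sum_congr rfl fun a _ => ?_
    by_cases h : P a ω <;> simp [Set.indicator, h]
  calc ∫ ω, ((Finset.univ.filter (fun a : Fin n => P a ω)).card : ℝ) ∂μ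
      = ∫ ω, ∑ a : Fin n, Set.indicator {ω' | P a ω'} (fun _ => (1 : ℝ)) ω ∂μ := by
        refine integral_congr_ae (Filter.Eventually.of_forall fun ω => hcard ω)
    _ = ∑ a : Fin n, ∫ ω, Set.indicator {ω' | P a ω'} (fun _ => (1 : ℝ)) ω ∂μ :=
        integral_finset_sum _ fun a _ => (integrable_const 1).indicator (hPmeasSet a)
    _ = ∑ a : Fin n, (μ {ω | P a ω}).toReal := by
        refine Finset.sum_congr rfl fun a _ => ?_
        rw [integral_indicator_const (1 : ℝ) (hPmeasSet a)]
        simp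
        rfl
    _ ≤ ∑ a : Fin n, Real.exp (-2 * (r : ℝ) * ∑ i, (ε a) ^ 2 / ((c i : ℝ)) ^ 2) :=
        Finset.sum_le_sum fun a _ => key a
end

section
/- Under the statistical model, for a single record a assigned to cluster id_a ∈ {1,…,k} with threshold ε_a ≥ 0, and with the random variables D^{a,j}_z mutually independent across all j ∈ {1,…,k} and z ∈ {1,…,r}, the probability that a is uncertain satisfies P( d*(a, id_a) − d(a, id_a) ≥ ε_a and d(a, i) − d*(a, i) ≥ ε_a for all i ≠ id_a ) ≤ exp( −2r · Σ_{i=1}^{k} ε_a² / |Ĉ_i|² ). -/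
open MeasureTheory ProbabilityTheory Real

lemma key_ineq {p : ℝ} (hp0 : 0 ≤ p) (hp1 : p ≤ 1) (h : ℝ) :
    1 - p + p * Real.exp h ≤ Real.exp (p * h + h ^ 2 / 8) := by
  set u : ℝ → ℝ := fun x => 1 - p + p * Real.exp x with hu_def
  have hu_pos : ∀ x, 0 < u x := by
    intro x
    rcases lt_or_eq_of_le hp1 with h1 | h1
    · have h2 : 0 ≤ p * Real.exp x := mul_nonneg hp0 (exp_pos x).le
      simp only [u]; nlinarith
    · have h2 : u x = Real.exp x := by simp [u, h1]
      rw [h2]; exact exp_pos x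
  set f : ℝ → ℝ := fun x => Real.log (u x) - p * x - x ^ 2 / 8 with hf_def
  set g : ℝ → ℝ := fun x => p * Real.exp x / u x - p - x / 4 with hg_def
  have hu' : ∀ x, HasDerivAt u (p * Real.exp x) x := fun x =>
    ((Real.hasDerivAt_exp x).const_mul p).const_add (1 - p)
  have hf' : ∀ x, HasDerivAt f (g x) x := by
    intro x
    have h1 : HasDerivAt (fun y => Real.log (u y)) (p * Real.exp x / u x) x :=
      (hu' x).log (hu_pos x).ne'
    have h2 : HasDerivAt (fun y : ℝ => p * y) p x := by
      simpa using (hasDerivAt_id x).const_mul p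
    have h3 : HasDerivAt (fun y : ℝ => y ^ 2 / 8) (x / 4) x := by
      have := (hasDerivAt_pow 2 x).div_const 8
      exact this.congr_deriv (by ring)
    exact (h1.sub h2).sub h3
  have hg' : ∀ x, HasDerivAt g
      ((p * Real.exp x * u x - p * Real.exp x * (p * Real.exp x)) / u x ^ 2 - 1 / 4) x := by
    intro x
    have h1 : HasDerivAt (fun y => p * Real.exp y / u y)
        ((p * Real.exp x * u x - p * Real.exp x * (p * Real.exp x)) / u x ^ 2) x :=
      ((Real.hasDerivAt_exp x).const_mul p).div (hu' x) (hu_pos x).ne'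
    have h3 : HasDerivAt (fun y : ℝ => y / 4) (1 / 4) x := by
      simpa using (hasDerivAt_id x).div_const 4
    exact (h1.sub_const p).sub h3
  have hg_nonpos : ∀ x,
      (p * Real.exp x * u x - p * Real.exp x * (p * Real.exp x)) / u x ^ 2 - 1 / 4 ≤ 0 := by
    intro x
    have hA : 0 ≤ p * Real.exp x := mul_nonneg hp0 (exp_pos x).le
    have hB : (0:ℝ) ≤ 1 - p := by linarith
    have hux : u x = p * Real.exp x + (1 - p) := by simp only [u]; ring
    have hu2 : 0 < u x ^ 2 := pow_pos (hu_pos x) 2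
    rw [sub_nonpos, div_le_iff₀ hu2]
    nlinarith [sq_nonneg (p * Real.exp x - (1 - p))]
  have hg_anti : Antitone g :=
    antitone_of_deriv_nonpos (fun x => (hg' x).differentiableAt)
      (fun x => by rw [(hg' x).deriv]; exact hg_nonpos x)
  have hg0 : g 0 = 0 := by
    simp only [g, u, Real.exp_zero, mul_one]
    have : 1 - p + p = 1 := by ring
    rw [this]
    simp
  have hf0 : f 0 = 0 := by
    simp only [f, u, Real.exp_zero, mul_one, mul_zero]
    have : 1 - p + p = 1 := by ring
    rw [this]
    simp
  have hfh : f h ≤ 0 := by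
    rcases le_total 0 h with hh | hh
    · have : AntitoneOn f (Set.Ici 0) := by
        refine antitoneOn_of_deriv_nonpos (convex_Ici 0)
          (fun x _ => (hf' x).differentiableAt.continuousAt.continuousWithinAt)
          (fun x _ => (hf' x).differentiableAt.differentiableWithinAt) ?_
        intro x hx
        rw [(hf' x).deriv]
        have : g x ≤ g 0 := hg_anti (le_of_lt (by simpa using hx))
        rw [hg0] at this; exact this
      have := this (Set.self_mem_Ici) (Set.mem_Ici.mpr hh) hh
      rwa [hf0] at this
    · have : MonotoneOn f (Set.Iic 0) := by
        refine monotoneOn_of_deriv_nonneg (convex_Iic 0)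
          (fun x _ => (hf' x).differentiableAt.continuousAt.continuousWithinAt)
          (fun x _ => (hf' x).differentiableAt.differentiableWithinAt) ?_
        intro x hx
        rw [(hf' x).deriv]
        have : g 0 ≤ g x := hg_anti (le_of_lt (by simpa using hx))
        rw [hg0] at this; exact this
      have := this (Set.mem_Iic.mpr hh) Set.self_mem_Iic hh
      rwa [hf0] at this
  have : Real.log (u h) ≤ p * h + h ^ 2 / 8 := by
    have := hfh
    simp only [f] at this
    linarith
  calc u h ≤ Real.exp (p * h + h ^ 2 / 8) := by
        rw [← Real.exp_log (hu_pos h)]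
        exact Real.exp_le_exp.mpr this

lemma hoeffding_mgf {Ω : Type*} [MeasurableSpace Ω] {μ : Measure Ω} [IsProbabilityMeasure μ]
    {X : Ω → ℝ} (hm : Measurable X) {c : ℝ} (hc : 0 < c)
    (hX : ∀ ω, X ω ∈ Set.Icc (0:ℝ) c) (t : ℝ) :
    mgf X μ t ≤ Real.exp (t * (∫ ω, X ω ∂μ) + t ^ 2 * c ^ 2 / 8) := by
  have hint : Integrable X μ := by
    refine Integrable.mono' (integrable_const c) hm.aestronglyMeasurable
      (ae_of_all _ fun ω => ?_)
    rw [Real.norm_eq_abs, abs_of_nonneg (hX ω).1]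
    exact (hX ω).2
  set m : ℝ := ∫ ω, X ω ∂μ with hm_def
  have hm0 : 0 ≤ m := integral_nonneg fun ω => (hX ω).1
  have hm1 : m ≤ c := by
    have := integral_mono hint (integrable_const c) fun ω => (hX ω).2
    simpa using this
  -- pointwise convexity bound
  have hpt : ∀ ω, Real.exp (t * X ω) ≤ 1 + X ω * ((Real.exp (t * c) - 1) / c) := by
    intro ω
    have hx0 := (hX ω).1
    have hxc := (hX ω).2
    have ha : (0:ℝ) ≤ 1 - X ω / c := by
      rw [sub_nonneg, div_le_one hc]; exact hxc
    have hb : (0:ℝ) ≤ X ω / c := div_nonneg hx0 hc.le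
    have hab : (1 - X ω / c) + X ω / c = 1 := by ring
    have hcv := convexOn_exp.2 (Set.mem_univ (0:ℝ)) (Set.mem_univ (t * c)) ha hb hab
    have h1 : (1 - X ω / c) • (0:ℝ) + (X ω / c) • (t * c) = t * X ω := by
      rw [smul_eq_mul, smul_eq_mul, mul_zero, zero_add]
      field_simp
    rw [h1] at hcv
    calc Real.exp (t * X ω) ≤ (1 - X ω / c) * Real.exp 0 + (X ω / c) * Real.exp (t * c) := hcv
      _ = 1 + X ω * ((Real.exp (t * c) - 1) / c) := by
          rw [Real.exp_zero]; field_simp; ring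
  -- integrate
  have hint_exp : Integrable (fun ω => Real.exp (t * X ω)) μ := by
    refine Integrable.mono' (integrable_const (Real.exp (|t| * c)))
      ((hm.const_mul t).exp.aestronglyMeasurable) (ae_of_all _ fun ω => ?_)
    rw [Real.norm_eq_abs, abs_of_pos (Real.exp_pos _)]
    apply Real.exp_le_exp.mpr
    calc t * X ω ≤ |t * X ω| := le_abs_self _
      _ = |t| * |X ω| := abs_mul _ _
      _ ≤ |t| * c := by
          apply mul_le_mul_of_nonneg_left _ (abs_nonneg t)
          rw [abs_of_nonneg (hX ω).1]; exact (hX ω).2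
  have hstep : mgf X μ t ≤ 1 + m * ((Real.exp (t * c) - 1) / c) := by
    rw [mgf]
    calc (∫ ω, Real.exp (t * X ω) ∂μ)
        ≤ ∫ ω, 1 + X ω * ((Real.exp (t * c) - 1) / c) ∂μ :=
          integral_mono hint_exp ((integrable_const 1).add (hint.mul_const _)) hpt
      _ = 1 + m * ((Real.exp (t * c) - 1) / c) := by
          rw [integral_add (integrable_const 1) (hint.mul_const _), integral_const,
            integral_mul_const]
          simp [m]
  -- apply the key inequality with p = m / c, h = t * c
  have hp0 : 0 ≤ m / c := div_nonneg hm0 hc.le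
  have hp1 : m / c ≤ 1 := (div_le_one hc).mpr hm1
  have hkey := key_ineq hp0 hp1 (t * c)
  have heq1 : 1 - m / c + m / c * Real.exp (t * c) = 1 + m * ((Real.exp (t * c) - 1) / c) := by
    field_simp
    ring
  have heq2 : m / c * (t * c) + (t * c) ^ 2 / 8 = t * m + t ^ 2 * c ^ 2 / 8 := by
    field_simp
  rw [heq1, heq2] at hkey
  exact hstep.trans hkey

/-- Statistical model: `k` nonempty clusters of sizes `c 1, …, c k ≥ 1`,
`r ≥ 1` sampling iterations; for each cluster index `j`, the random variables
`D j 1, …, D j r` take values in `[0, c j]` and are identically distributed with common mean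
`dstar j`; moreover the variables `D j z` are mutually independent across all pairs `(j, z)`.
The empirical mean is `d(a,j)(ω) = (1/r) · ∑_z D j z ω`. For a record `a` assigned to cluster
`ida` with threshold `ε ≥ 0`, the probability that `a` is *uncertain*, i.e. that
`dstar ida − d(a,ida) ≥ ε` and `d(a,i) − dstar i ≥ ε` for every `i ≠ ida`, is at most
`exp(−2r · ∑_i ε² / (c i)²)`. -/
theorem stmt1
    {Ω : Type*} [MeasurableSpace Ω] (μ : Measure Ω) [IsProbabilityMeasure μ]
    (k r : ℕ) (hk : 1 ≤ k) (hr : 1 ≤ r)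
    (c : Fin k → ℕ) (hc : ∀ i, 1 ≤ c i)
    (D : Fin k → Fin r → Ω → ℝ)
    (hmeas : ∀ j z, Measurable (D j z))
    (hbdd : ∀ j z ω, D j z ω ∈ Set.Icc (0 : ℝ) ((c j : ℕ) : ℝ))
    (hident : ∀ j z z', IdentDistrib (D j z) (D j z') μ μ)
    (hindep : iIndepFun
        (fun p : Fin k × Fin r => D p.1 p.2) μ)
    (dstar : Fin k → ℝ)
    (hmean : ∀ j z, ∫ ω, D j z ω ∂μ = dstar j)
    (ida : Fin k) (ε : ℝ) (hε : 0 ≤ ε) :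
    μ {ω | ε ≤ dstar ida - (1 / (r : ℝ)) * ∑ z, D ida z ω ∧
           ∀ i, i ≠ ida → ε ≤ (1 / (r : ℝ)) * ∑ z, D i z ω - dstar i}
      ≤ ENNReal.ofReal
          (Real.exp (-2 * (r : ℝ) * ∑ i, ε ^ 2 / ((c i : ℕ) : ℝ) ^ 2)) := by
  have hrpos : (0:ℝ) < (r : ℝ) := by exact_mod_cast hr
  have hcpos : ∀ i, (0:ℝ) < ((c i : ℕ) : ℝ) := fun i => by exact_mod_cast hc i
  set lam : Fin k → ℝ := fun i => 4 * ε / ((c i : ℕ) : ℝ) ^ 2 with hlam_def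
  have hlam0 : ∀ i, 0 ≤ lam i := fun i =>
    div_nonneg (by linarith) (sq_nonneg _)
  set sg : Fin k → ℝ := fun i => if i = ida then -1 else 1 with hsg_def
  have hsg_sq : ∀ i, sg i ^ 2 = 1 := by
    intro i; simp only [sg]; split <;> norm_num
  set Y : Fin k × Fin r → Ω → ℝ := fun p ω => sg p.1 * lam p.1 * D p.1 p.2 ω with hY_def
  set X : Ω → ℝ := fun ω => ∑ p : Fin k × Fin r, Y p ω with hX_def
  set B : ℝ := ∑ i, lam i * ((r:ℝ) * ε + sg i * ((r:ℝ) * dstar i)) with hB_def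
  -- Step 1: the event is contained in the tail event {B ≤ X}
  have hsub : {ω | ε ≤ dstar ida - (1 / (r : ℝ)) * ∑ z, D ida z ω ∧
           ∀ i, i ≠ ida → ε ≤ (1 / (r : ℝ)) * ∑ z, D i z ω - dstar i} ⊆ {ω | B ≤ X ω} := by
    intro ω hω
    obtain ⟨h1, h2⟩ := hω
    have key : ∀ i, lam i * ((r:ℝ) * ε + sg i * ((r:ℝ) * dstar i)) ≤
        lam i * (sg i * ∑ z, D i z ω) := by
      intro i
      refine mul_le_mul_of_nonneg_left ?_ (hlam0 i)
      have hS : (r:ℝ) * ((1/(r:ℝ)) * ∑ z, D i z ω) = ∑ z, D i z ω := by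
        field_simp
      by_cases hi : i = ida
      · subst hi
        simp only [sg, if_pos rfl]
        have h' := mul_le_mul_of_nonneg_left h1 hrpos.le
        rw [mul_sub, hS] at h'
        linarith
      · simp only [sg, if_neg hi]
        have h' := mul_le_mul_of_nonneg_left (h2 i hi) hrpos.le
        rw [mul_sub, hS] at h'
        linarith
    have hXval : X ω = ∑ i, lam i * (sg i * ∑ z, D i z ω) := by
      simp only [X, Y]
      rw [Fintype.sum_prod_type]
      refine Finset.sum_congr rfl fun i _ => ?_
      simp only [Finset.mul_sum]
      refine Finset.sum_congr rfl fun z _ => ?_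
      ring
    have : B ≤ ∑ i, lam i * (sg i * ∑ z, D i z ω) :=
      Finset.sum_le_sum fun i _ => key i
    rw [Set.mem_setOf_eq, hXval]
    exact this
  -- measurability and integrability
  have hYmeas : ∀ p, Measurable (Y p) := fun p => (hmeas p.1 p.2).const_mul _
  have hXmeas : Measurable X :=
    Finset.measurable_sum Finset.univ fun p _ => hYmeas p
  have hYle : ∀ p ω, Y p ω ≤ lam p.1 * ((c p.1 : ℕ) : ℝ) := by
    intro p ω
    have hD0 := (hbdd p.1 p.2 ω).1
    have hDc := (hbdd p.1 p.2 ω).2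
    have hl := hlam0 p.1
    have hcc := (hcpos p.1).le
    simp only [Y, sg]
    split
    · nlinarith
    · nlinarith
  set M : ℝ := ∑ p : Fin k × Fin r, lam p.1 * ((c p.1 : ℕ) : ℝ) with hM_def
  have hXle : ∀ ω, X ω ≤ M := fun ω =>
    Finset.sum_le_sum fun p _ => hYle p ω
  have hint : Integrable (fun ω => Real.exp (1 * X ω)) μ := by
    refine Integrable.mono' (integrable_const (Real.exp M))
      ((hXmeas.const_mul 1).exp.aestronglyMeasurable) (ae_of_all _ fun ω => ?_)
    rw [Real.norm_eq_abs, abs_of_pos (Real.exp_pos _)]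
    apply Real.exp_le_exp.mpr
    rw [one_mul]
    exact hXle ω
  -- Chernoff bound at t = 1
  have hcher := measure_ge_le_exp_mul_mgf (μ := μ) (X := X) (t := 1) B zero_le_one hint
  -- factor the mgf
  have hYindep : iIndepFun Y μ :=
    hindep.comp (fun p => fun x : ℝ => sg p.1 * lam p.1 * x)
      (fun p => measurable_id.const_mul _)
  have hXeq : X = ∑ p : Fin k × Fin r, Y p := by
    funext ω
    exact (Finset.sum_apply ω Finset.univ Y).symm
  have hprod : mgf X μ 1 = ∏ p : Fin k × Fin r, mgf (Y p) μ 1 := by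
    rw [hXeq]; exact hYindep.mgf_sum hYmeas Finset.univ
  -- bound each factor via Hoeffding's lemma
  have hfac : ∀ p : Fin k × Fin r, mgf (Y p) μ 1 ≤
      Real.exp (sg p.1 * lam p.1 * dstar p.1 +
        lam p.1 ^ 2 * ((c p.1 : ℕ) : ℝ) ^ 2 / 8) := by
    intro p
    have h1 : mgf (Y p) μ 1 = mgf (D p.1 p.2) μ (sg p.1 * lam p.1) := by
      simp only [mgf, Y, one_mul]
    rw [h1]
    have h2 := hoeffding_mgf (μ := μ) (hmeas p.1 p.2) (hcpos p.1)
      (fun ω => hbdd p.1 p.2 ω) (sg p.1 * lam p.1)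
    rw [hmean p.1 p.2] at h2
    have h3 : (sg p.1 * lam p.1) ^ 2 = lam p.1 ^ 2 := by
      rw [mul_pow, hsg_sq p.1, one_mul]
    rw [h3] at h2
    exact h2
  have hprod_le : mgf X μ 1 ≤
      Real.exp (∑ p : Fin k × Fin r, (sg p.1 * lam p.1 * dstar p.1 +
        lam p.1 ^ 2 * ((c p.1 : ℕ) : ℝ) ^ 2 / 8)) := by
    rw [hprod, Real.exp_sum]
    exact Finset.prod_le_prod (fun p _ => mgf_nonneg) (fun p _ => hfac p)
  -- combine and compute the exponent
  have hfinal : Real.exp (-1 * B) *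
      Real.exp (∑ p : Fin k × Fin r, (sg p.1 * lam p.1 * dstar p.1 +
        lam p.1 ^ 2 * ((c p.1 : ℕ) : ℝ) ^ 2 / 8)) =
      Real.exp (-2 * (r : ℝ) * ∑ i, ε ^ 2 / ((c i : ℕ) : ℝ) ^ 2) := by
    rw [← Real.exp_add]
    congr 1
    rw [Fintype.sum_prod_type]
    simp only [Finset.sum_const, Finset.card_univ, Fintype.card_fin, nsmul_eq_mul]
    rw [hB_def, neg_one_mul, Finset.mul_sum, ← Finset.sum_neg_distrib,
      ← Finset.sum_add_distrib]
    refine Finset.sum_congr rfl fun i _ => ?_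
    have hci : ((c i : ℕ) : ℝ) ≠ 0 := (hcpos i).ne'
    simp only [lam]
    field_simp
    ring
  have htail : (μ {ω | B ≤ X ω}).toReal ≤
      Real.exp (-2 * (r : ℝ) * ∑ i, ε ^ 2 / ((c i : ℕ) : ℝ) ^ 2) := by
    calc (μ {ω | B ≤ X ω}).toReal ≤ Real.exp (-1 * B) * mgf X μ 1 := hcher
      _ ≤ Real.exp (-1 * B) * Real.exp (∑ p : Fin k × Fin r,
            (sg p.1 * lam p.1 * dstar p.1 +
              lam p.1 ^ 2 * ((c p.1 : ℕ) : ℝ) ^ 2 / 8)) := by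
          exact mul_le_mul_of_nonneg_left hprod_le (Real.exp_pos _).le
      _ = _ := hfinal
  calc μ {ω | ε ≤ dstar ida - (1 / (r : ℝ)) * ∑ z, D ida z ω ∧
           ∀ i, i ≠ ida → ε ≤ (1 / (r : ℝ)) * ∑ z, D i z ω - dstar i}
      ≤ μ {ω | B ≤ X ω} := measure_mono hsub
    _ = ENNReal.ofReal ((μ {ω | B ≤ X ω}).toReal) :=
        (ENNReal.ofReal_toReal (measure_ne_top μ _)).symm
    _ ≤ ENNReal.ofReal (Real.exp (-2 * (r : ℝ) * ∑ i, ε ^ 2 / ((c i : ℕ) : ℝ) ^ 2)) :=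
        ENNReal.ofReal_le_ofReal htail
end
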